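/- Let f : ℝ^n → ℝ and c : ℝ^n → ℝ^m be continuously differentiable. Let sequences {x^k} ⊂ ℝ^n with x^k_i > 0 for all i,k, {z^k} ⊂ ℝ^n with z^k ≤ 0 componentwise, {y^k}, {ŷ^k} ⊂ ℝ^m with {ŷ^k} bounded, ε_k ≥ 0 with ε_k → 0, and ρ_k > 0 with ρ_k → 0, satisfy ‖∇f(x^k) + ∇c(x^k)ᵀy^k + z^k‖ ≤ ε_k, ‖c(x^k) + ρ_k(ŷ^k − y^k)‖ ≤ 2ε_k, and min{x^k_i, −z^k_i} → 0 for each i. If x^k → x* and ρ_k z^k → z̃* along a subsequence indexed by K, then x* ≥ 0, z̃* ≤ 0, ∇c(x*)ᵀc(x*) + z̃* = 0, and min{x*_i, −z̃*_i} = 0 for all i; in particular, x* is a KKT stationary point of the feasibility problem: minimize (1/2)‖c(x)‖² subject to x ≥ 0. -/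

import Mathlib

open Filter Topology

set_option maxHeartbeats 1000000

/-- Proposition 2, stationarity for the feasibility problem.
Let f : ℝ^n → ℝ and c : ℝ^n → ℝ^m be continuously differentiable.  Let
{x^k} ⊂ ℝ^n with x^k_i > 0 for all i,k, {z^k} ⊂ ℝ^n with z^k ≤ 0 componentwise,
{y^k}, {ŷ^k} ⊂ ℝ^m with {ŷ^k} bounded, ε_k ≥ 0 with ε_k → 0, and ρ_k > 0 with
ρ_k → 0, satisfy ‖∇f(x^k) + ∇c(x^k)ᵀy^k + z^k‖ ≤ ε_k,
‖c(x^k) + ρ_k(ŷ^k − y^k)‖ ≤ 2ε_k, and min{x^k_i, −z^k_i} → 0 for each i.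
If x^k → x* and ρ_k z^k → z̃* along a subsequence indexed by K, then x* ≥ 0,
z̃* ≤ 0, ∇c(x*)ᵀc(x*) + z̃* = 0, and min{x*_i, −z̃*_i} = 0 for all i; in
particular, x* is a KKT stationary point of the feasibility problem
min_{x ≥ 0} (1/2)‖c(x)‖². -/
theorem stmt4 {n m : ℕ}
    (f : EuclideanSpace ℝ (Fin n) → ℝ)
    (c : EuclideanSpace ℝ (Fin n) → EuclideanSpace ℝ (Fin m))
    (hf : ContDiff ℝ 1 f) (hc : ContDiff ℝ 1 c)
    (x z : ℕ → EuclideanSpace ℝ (Fin n))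
    (y yhat : ℕ → EuclideanSpace ℝ (Fin m))
    (hxpos : ∀ k, ∀ i, 0 < x k i)
    (hznonpos : ∀ k, ∀ i, z k i ≤ 0)
    (hyhatbdd : ∃ R : ℝ, ∀ k, ‖yhat k‖ ≤ R)
    (ε : ℕ → ℝ) (hεnonneg : ∀ k, 0 ≤ ε k) (hεto0 : Tendsto ε atTop (nhds 0))
    (ρ : ℕ → ℝ) (hρpos : ∀ k, 0 < ρ k) (hρto0 : Tendsto ρ atTop (nhds 0))
    (hstat : ∀ k, ‖gradient f (x k) + (fderiv ℝ c (x k)).adjoint (y k) + z k‖ ≤ ε k)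
    (hfeas : ∀ k, ‖c (x k) + ρ k • (yhat k - y k)‖ ≤ 2 * ε k)
    (hcompl : ∀ i, Tendsto (fun k => min (x k i) (-(z k i))) atTop (nhds 0))
    (xstar ztilde : EuclideanSpace ℝ (Fin n))
    (φ : ℕ → ℕ) (hφ : StrictMono φ)
    (hxlim : Tendsto (fun k => x (φ k)) atTop (nhds xstar))
    (hzlim : Tendsto (fun k => ρ (φ k) • z (φ k)) atTop (nhds ztilde)) :
    (∀ i, 0 ≤ xstar i) ∧ (∀ i, ztilde i ≤ 0) ∧
    (fderiv ℝ c xstar).adjoint (c xstar) + ztilde = 0 ∧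
    (∀ i, min (xstar i) (-(ztilde i)) = 0) := by
  obtain ⟨R, hR⟩ := hyhatbdd
  have hφtop : Tendsto φ atTop atTop := hφ.tendsto_atTop
  have hρ' : Tendsto (fun k => ρ (φ k)) atTop (nhds 0) := hρto0.comp hφtop
  have hε' : Tendsto (fun k => ε (φ k)) atTop (nhds 0) := hεto0.comp hφtop
  have hxcoord : ∀ i, Tendsto (fun k => x (φ k) i) atTop (nhds (xstar i)) := fun i =>
    ((EuclideanSpace.proj i).continuous.tendsto xstar).comp hxlim
  have hzcoord : ∀ i, Tendsto (fun k => ρ (φ k) * z (φ k) i) atTop (nhds (ztilde i)) := fun i =>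
    ((EuclideanSpace.proj i).continuous.tendsto ztilde).comp hzlim
  have hx0 : ∀ i, 0 ≤ xstar i := fun i =>
    ge_of_tendsto' (hxcoord i) fun k => (hxpos (φ k) i).le
  have hz0 : ∀ i, ztilde i ≤ 0 := fun i =>
    le_of_tendsto' (hzcoord i)
      fun k => mul_nonpos_of_nonneg_of_nonpos (hρpos (φ k)).le (hznonpos (φ k) i)
  -- limit of c at x*
  have h1 : Tendsto (fun k => c (x (φ k))) atTop (nhds (c xstar)) :=
    (hc.continuous.tendsto xstar).comp hxlim
  have h2 : Tendsto (fun k => ρ (φ k) • yhat (φ k)) atTop (nhds 0) := by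
    refine squeeze_zero_norm (fun k => ?_) (by simpa using hρ'.mul_const R)
    rw [norm_smul, Real.norm_eq_abs, abs_of_pos (hρpos (φ k))]
    exact mul_le_mul_of_nonneg_left (hR (φ k)) (hρpos (φ k)).le
  have h3 : Tendsto (fun k => c (x (φ k)) + ρ (φ k) • (yhat (φ k) - y (φ k))) atTop
      (nhds 0) :=
    squeeze_zero_norm (fun k => hfeas (φ k)) (by simpa using hε'.const_mul 2)
  have hv : Tendsto (fun k => ρ (φ k) • y (φ k)) atTop (nhds (c xstar)) := by
    have := (h1.add h2).sub h3
    rw [show c xstar + 0 - 0 = c xstar by abel] at this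
    refine this.congr fun k => ?_
    simp [smul_sub]
  -- adjoint of fderiv tendsto
  have hadjc : Continuous
      (fun L : EuclideanSpace ℝ (Fin n) →L[ℝ] EuclideanSpace ℝ (Fin m) => L.adjoint) :=
    (ContinuousLinearMap.adjoint
      (E := EuclideanSpace ℝ (Fin n)) (F := EuclideanSpace ℝ (Fin m))).continuous
  have hfd : Tendsto (fun k => (fderiv ℝ c (x (φ k))).adjoint) atTop
      (nhds (fderiv ℝ c xstar).adjoint) :=
    (hadjc.tendsto _).comp (((hc.continuous_fderiv one_ne_zero).tendsto xstar).comp hxlim)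
  have hA : Tendsto (fun k => (fderiv ℝ c (x (φ k))).adjoint (ρ (φ k) • y (φ k))) atTop
      (nhds ((fderiv ℝ c xstar).adjoint (c xstar))) :=
    (isBoundedBilinearMap_apply.continuous.tendsto _).comp (hfd.prodMk_nhds hv)
  -- gradient term
  have hgc : Continuous (gradient f) := by
    unfold gradient
    exact (LinearIsometryEquiv.continuous _).comp (hf.continuous_fderiv one_ne_zero)
  have hgrad : Tendsto (fun k => ρ (φ k) • gradient f (x (φ k))) atTop (nhds 0) := by
    have := hρ'.smul ((hgc.tendsto xstar).comp hxlim)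
    simpa using this
  have hu : Tendsto (fun k => ρ (φ k) •
      (gradient f (x (φ k)) + (fderiv ℝ c (x (φ k))).adjoint (y (φ k)) + z (φ k))) atTop
      (nhds 0) := by
    refine squeeze_zero_norm (fun k => ?_) (by simpa using hρ'.mul hε')
    rw [norm_smul, Real.norm_eq_abs, abs_of_pos (hρpos (φ k))]
    exact mul_le_mul_of_nonneg_left (hstat (φ k)) (hρpos (φ k)).le
  have key : Tendsto (fun k => ρ (φ k) • z (φ k)) atTop
      (nhds (-((fderiv ℝ c xstar).adjoint (c xstar)))) := by
    have h := (hu.sub hgrad).sub hA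
    rw [show (0 : EuclideanSpace ℝ (Fin n)) - 0 - (fderiv ℝ c xstar).adjoint (c xstar)
        = -((fderiv ℝ c xstar).adjoint (c xstar)) by abel] at h
    refine h.congr fun k => ?_
    simp [smul_add, map_smul]
    abel
  have hzt : ztilde = -((fderiv ℝ c xstar).adjoint (c xstar)) :=
    tendsto_nhds_unique hzlim key
  refine ⟨hx0, hz0, by rw [hzt]; abel, fun i => ?_⟩
  -- complementarity
  rcases eq_or_lt_of_le (hx0 i) with h0 | hpos
  · rw [← h0]
    exact min_eq_left (neg_nonneg.mpr (hz0 i))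
  · -- show ztilde i = 0
    have hmin : Tendsto (fun k => min (x (φ k) i) (-(z (φ k) i))) atTop (nhds 0) :=
      (hcompl i).comp hφtop
    have hev1 : ∀ᶠ k in atTop, xstar i / 2 < x (φ k) i :=
      (hxcoord i).eventually (eventually_gt_nhds (by linarith))
    have hev2 : ∀ᶠ k in atTop, min (x (φ k) i) (-(z (φ k) i)) < xstar i / 2 :=
      hmin.eventually (eventually_lt_nhds (by linarith))
    have hzi : Tendsto (fun k => -(z (φ k) i)) atTop (nhds 0) := by
      refine hmin.congr' ?_
      filter_upwards [hev1, hev2] with k h1 h2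
      rcases min_cases (x (φ k) i) (-(z (φ k) i)) with ⟨he, _⟩ | ⟨he, _⟩
      · rw [he] at h2; linarith
      · exact he
    have : Tendsto (fun k => ρ (φ k) * z (φ k) i) atTop (nhds 0) := by
      have := hρ'.mul (hzi.neg)
      simpa using this
    have h0 : ztilde i = 0 := tendsto_nhds_unique (hzcoord i) this
    rw [h0, neg_zero]
    exact min_eq_right (hx0 i)
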